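/- Let α ∈ (0,1] and let h : [0,∞) → ℝ be measurable and bounded. If h(t) = −(Γ(1+α)/Γ(α)) ∫_0^t h(x)(t − x)^{α-1} dx for every t ≥ 0, then h(t) = 0 for every t ≥ 0. -/

import Mathlib

open MeasureTheory Set

private lemma aux_rpow_int {α : ℝ} (hα : 0 < α) (t a b : ℝ) :
    IntervalIntegrable (fun x : ℝ => (t - x) ^ (α - 1)) volume a b := by
  have := (intervalIntegral.intervalIntegrable_rpow' (by linarith : (-1:ℝ) < α - 1)
    (a := t - a) (b := t - b)).comp_sub_left t
  simpa using this

private lemma aux_prod_int {α C : ℝ} (hα : 0 < α) {h : ℝ → ℝ} (hmeas : Measurable h)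
    (hbd : ∀ x, 0 ≤ x → |h x| ≤ C) {a b t : ℝ} (ha : 0 ≤ a) (hab : a ≤ b) (hbt : b ≤ t) :
    IntervalIntegrable (fun x => h x * (t - x) ^ (α - 1)) volume a b := by
  rw [intervalIntegrable_iff_integrableOn_Ioc_of_le hab]
  have hg : IntegrableOn (fun x : ℝ => C * (t - x) ^ (α - 1)) (Ioc a b) := by
    have := ((aux_rpow_int hα t a b).const_mul C)
    rwa [intervalIntegrable_iff_integrableOn_Ioc_of_le hab] at this
  apply hg.mono'
  · exact (hmeas.mul (Measurable.pow (measurable_const.sub measurable_id) measurable_const : Measurable fun x : ℝ => (t - x) ^ (α - 1))).aestronglyMeasurable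
  · filter_upwards [ae_restrict_mem measurableSet_Ioc] with x hx
    have hx0 : 0 ≤ x := le_trans ha hx.1.le
    have htx : 0 ≤ t - x := by have := hx.2; linarith
    have hr : 0 ≤ (t - x) ^ (α - 1) := Real.rpow_nonneg htx _
    calc ‖h x * (t - x) ^ (α - 1)‖ = |h x| * (t - x) ^ (α - 1) := by
          rw [Real.norm_eq_abs, abs_mul, abs_of_nonneg hr]
      _ ≤ C * (t - x) ^ (α - 1) := mul_le_mul_of_nonneg_right (hbd x hx0) hr

private lemma aux_rpow_val {α : ℝ} (hα : 0 < α) {S t : ℝ} (hSt : S ≤ t) :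
    ∫ x in S..t, (t - x) ^ (α - 1) = (t - S) ^ α / α := by
  rw [intervalIntegral.integral_comp_sub_left (fun u : ℝ => u ^ (α - 1)) t, sub_self]
  rw [integral_rpow (Or.inl (by linarith : (-1:ℝ) < α - 1))]
  rw [sub_add_cancel, Real.zero_rpow (ne_of_gt hα), sub_zero]

private lemma step_lemma {α : ℝ} (hα : α ∈ Ioc (0 : ℝ) 1)
    {h : ℝ → ℝ} (hmeas : Measurable h) {C : ℝ} (hbd : ∀ x, 0 ≤ x → |h x| ≤ C)
    (heq : ∀ t, 0 ≤ t → h t = -α * ∫ x in (0:ℝ)..t, h x * (t - x) ^ (α - 1))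
    {S : ℝ} (hS : 0 ≤ S) (hzero : ∀ x ∈ Icc (0:ℝ) S, h x = 0)
    {B : ℝ} (hB0 : 0 ≤ B) (hB : ∀ x ∈ Icc S (S + 1/2), |h x| ≤ B) :
    ∀ t ∈ Icc S (S + 1/2), |h t| ≤ B * (1/2 : ℝ) ^ α := by
  obtain ⟨hα0, hα1⟩ := hα
  intro t ht
  have hSt : S ≤ t := ht.1
  have ht0 : 0 ≤ t := le_trans hS hSt
  have hint1 : IntervalIntegrable (fun x => h x * (t - x) ^ (α - 1)) volume 0 S :=
    aux_prod_int hα0 hmeas hbd le_rfl hS hSt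
  have hint2 : IntervalIntegrable (fun x => h x * (t - x) ^ (α - 1)) volume S t :=
    aux_prod_int hα0 hmeas hbd hS hSt le_rfl
  have hsplit : (∫ x in (0:ℝ)..t, h x * (t - x) ^ (α - 1))
      = (∫ x in (0:ℝ)..S, h x * (t - x) ^ (α - 1)) + ∫ x in S..t, h x * (t - x) ^ (α - 1) :=
    (intervalIntegral.integral_add_adjacent_intervals hint1 hint2).symm
  have h1 : (∫ x in (0:ℝ)..S, h x * (t - x) ^ (α - 1)) = 0 := by
    have hcongr : (∫ x in (0:ℝ)..S, h x * (t - x) ^ (α - 1))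
        = ∫ _x in (0:ℝ)..S, (0:ℝ) := by
      apply intervalIntegral.integral_congr
      intro x hx
      rw [uIcc_of_le hS] at hx
      show h x * (t - x) ^ (α - 1) = 0
      rw [hzero x hx, zero_mul]
    rw [hcongr, intervalIntegral.integral_zero]
  have hgint : IntervalIntegrable (fun x : ℝ => B * (t - x) ^ (α - 1)) volume S t :=
    (aux_rpow_int hα0 t S t).const_mul B
  have hbound : |∫ x in S..t, h x * (t - x) ^ (α - 1)|
      ≤ |∫ x in S..t, B * (t - x) ^ (α - 1)| := by
    rw [← Real.norm_eq_abs (∫ x in S..t, h x * (t - x) ^ (α - 1))]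
    apply intervalIntegral.norm_integral_le_abs_of_norm_le _ hgint
    filter_upwards [ae_restrict_mem measurableSet_uIoc] with x hx
    rw [uIoc_of_le hSt] at hx
    have hx0 : 0 ≤ x := le_trans hS hx.1.le
    have htx : 0 ≤ t - x := by have := hx.2; linarith
    have hr : 0 ≤ (t - x) ^ (α - 1) := Real.rpow_nonneg htx _
    calc ‖h x * (t - x) ^ (α - 1)‖ = |h x| * (t - x) ^ (α - 1) := by
          rw [Real.norm_eq_abs, abs_mul, abs_of_nonneg hr]
      _ ≤ B * (t - x) ^ (α - 1) :=
          mul_le_mul_of_nonneg_right (hB x ⟨hx.1.le, le_trans hx.2 ht.2⟩) hr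
  have hgval : (∫ x in S..t, B * (t - x) ^ (α - 1)) = B * ((t - S) ^ α / α) := by
    rw [intervalIntegral.integral_const_mul, aux_rpow_val hα0 hSt]
  rw [heq t ht0, hsplit, h1, zero_add, abs_mul, abs_neg, abs_of_pos hα0]
  have hval_nonneg : 0 ≤ B * ((t - S) ^ α / α) := by
    apply mul_nonneg hB0
    exact div_nonneg (Real.rpow_nonneg (by linarith) _) hα0.le
  calc α * |∫ x in S..t, h x * (t - x) ^ (α - 1)|
      ≤ α * |∫ x in S..t, B * (t - x) ^ (α - 1)| :=
        mul_le_mul_of_nonneg_left hbound hα0.le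
    _ = α * (B * ((t - S) ^ α / α)) := by rw [hgval, abs_of_nonneg hval_nonneg]
    _ = B * (t - S) ^ α := by
        field_simp
    _ ≤ B * (1/2 : ℝ) ^ α := by
        apply mul_le_mul_of_nonneg_left _ hB0
        exact Real.rpow_le_rpow (by linarith) (by linarith [ht.2]) hα0.le

theorem stmt3 (α : ℝ) (hα : α ∈ Ioc (0 : ℝ) 1)
    (h : ℝ → ℝ) (hmeas : Measurable h)
    (C : ℝ) (hbd : ∀ t, 0 ≤ t → |h t| ≤ C)
    (heq : ∀ t, 0 ≤ t →
      h t = -(Real.Gamma (1 + α) / Real.Gamma α)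
        * ∫ x in (0 : ℝ)..t, h x * (t - x) ^ (α - 1)) :
    ∀ t, 0 ≤ t → h t = 0 := by
  obtain ⟨hα0, hα1⟩ := hα
  have hC0 : 0 ≤ C := le_trans (abs_nonneg _) (hbd 0 le_rfl)
  have hK : Real.Gamma (1 + α) / Real.Gamma α = α := by
    rw [add_comm, Real.Gamma_add_one (ne_of_gt hα0), mul_div_assoc,
      div_self (Real.Gamma_ne_zero (by
        intro m hc
        have : (0:ℝ) ≤ (m:ℝ) := Nat.cast_nonneg m
        rw [hc] at hα0; linarith)), mul_one]
  have heq' : ∀ t, 0 ≤ t → h t = -α * ∫ x in (0:ℝ)..t, h x * (t - x) ^ (α - 1) := by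
    intro t ht; rw [heq t ht, hK]
  have h0 : h 0 = 0 := by simpa using heq' 0 le_rfl
  -- fixed ratio
  set r : ℝ := (1/2 : ℝ) ^ α with hr
  have hr0 : 0 ≤ r := Real.rpow_nonneg (by norm_num) _
  have hr1 : r < 1 := Real.rpow_lt_one (by norm_num) (by norm_num) hα0
  -- key extension step
  have key : ∀ S : ℝ, 0 ≤ S → (∀ x ∈ Icc (0:ℝ) S, h x = 0) →
      ∀ t ∈ Icc S (S + 1/2), h t = 0 := by
    intro S hS hzero
    have iter : ∀ k : ℕ, ∀ t ∈ Icc S (S + 1/2), |h t| ≤ C * r ^ k := by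
      intro k
      induction k with
      | zero => intro t ht; simpa using hbd t (le_trans hS ht.1)
      | succ n ih =>
        intro t ht
        have := step_lemma ⟨hα0, hα1⟩ hmeas hbd heq' hS hzero
          (B := C * r ^ n) (by positivity) ih t ht
        calc |h t| ≤ C * r ^ n * r := this
          _ = C * r ^ (n + 1) := by ring
    intro t ht
    have hlim : Filter.Tendsto (fun k : ℕ => C * r ^ k) Filter.atTop (nhds 0) := by
      have := tendsto_pow_atTop_nhds_zero_of_lt_one hr0 hr1
      simpa using this.const_mul C
    have : |h t| ≤ 0 := ge_of_tendsto' hlim fun k => iter k t ht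
    have := abs_nonneg (h t)
    have : |h t| = 0 := le_antisymm ‹|h t| ≤ 0› this
    exact abs_eq_zero.mp this
  -- induction on half-steps
  have main : ∀ n : ℕ, ∀ x ∈ Icc (0:ℝ) (n * (1/2 : ℝ)), h x = 0 := by
    intro n
    induction n with
    | zero => intro x hx; simp at hx; rw [hx]; exact h0
    | succ n ih =>
      intro x hx
      rcases le_or_gt x (n * (1/2 : ℝ)) with hc | hc
      · exact ih x ⟨hx.1, hc⟩
      · have hn0 : (0:ℝ) ≤ n * (1/2 : ℝ) := by positivity
        apply key (n * (1/2 : ℝ)) hn0 ih x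
        constructor
        · exact hc.le
        · have := hx.2; push_cast at this ⊢; linarith
  intro t ht
  obtain ⟨n, hn⟩ := exists_nat_ge (2 * t)
  apply main n t
  refine ⟨ht, ?_⟩
  linarith
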